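/- Let X, Y be finite chains in a partially ordered set S, with X nonempty, and let X* = X ∖ {max X}. If X* < Y in the lexicographic order and max X ≥ max Y (using the convention that max∅ is below every element), then X ≤ Y in the lexicographic order. -/
import Mathlib


/-- The lexicographic order on finite chains in a poset `S`:
`X ≤ Y` iff `min (Y \ X) ≤ min (X \ Y)`, with the convention `max ∅ < x < min ∅`. -/
def lexLE {S : Type*} [PartialOrder S] [DecidableEq S] (X Y : Finset S) : Prop :=
  X \ Y = ∅ ∨ ∃ b ∈ Y \ X, ∀ a ∈ X \ Y, b ≤ a

def lexLT {S : Type*} [PartialOrder S] [DecidableEq S] (X Y : Finset S) : Prop :=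
  lexLE X Y ∧ ¬ lexLE Y X

/-- Let `X`, `Y` be finite chains, `X` nonempty with maximal element `m`, and let
`X* = X \ {max X}`. If `X* < Y` lexicographically and `max X ≥ max Y` (every element
of `Y` is `≤ m`; in particular this holds when `Y = ∅`), then `X ≤ Y`. -/
theorem lexLE_of_erase_max_lt {S : Type*} [PartialOrder S] [DecidableEq S]
    (X Y : Finset S) (hX : IsChain (· ≤ ·) (X : Set S)) (hY : IsChain (· ≤ ·) (Y : Set S))
    (m : S) (hm : m ∈ X) (hmax : ∀ a ∈ X, a ≤ m)
    (h1 : lexLT (X.erase m) Y) (h2 : ∀ b ∈ Y, b ≤ m) :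
    lexLE X Y := by
  obtain ⟨hle, hnle⟩ := h1
  rcases hle with hempty | ⟨b, hb, hball⟩
  · -- X* \ Y = ∅
    by_cases hmY : m ∈ Y
    · left
      ext a
      simp only [Finset.mem_sdiff, Finset.notMem_empty, iff_false, not_and, not_not]
      intro haX
      by_cases ham : a = m
      · exact ham ▸ hmY
      · have : a ∈ X.erase m \ Y ∨ a ∈ Y := by
          by_cases haY : a ∈ Y
          · exact Or.inr haY
          · exact Or.inl (Finset.mem_sdiff.mpr ⟨Finset.mem_erase.mpr ⟨ham, haX⟩, haY⟩)
        rcases this with h | h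
        · rw [hempty] at h; exact absurd h (Finset.notMem_empty a)
        · exact h
    · -- m ∉ Y, X \ Y = {m}
      have hYne : (Y \ X.erase m).Nonempty := by
        by_contra hcon
        rw [Finset.not_nonempty_iff_eq_empty] at hcon
        exact hnle (Or.inl hcon)
      obtain ⟨b, hb⟩ := hYne
      rw [Finset.mem_sdiff] at hb
      right
      refine ⟨b, Finset.mem_sdiff.mpr ⟨hb.1, ?_⟩, ?_⟩
      · intro hbX
        exact hb.2 (Finset.mem_erase.mpr ⟨fun h => hmY (h ▸ hb.1), hbX⟩)
      · intro a ha
        rw [Finset.mem_sdiff] at ha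
        by_cases ham : a = m
        · exact ham ▸ h2 b hb.1
        · exfalso
          have : a ∈ X.erase m \ Y :=
            Finset.mem_sdiff.mpr ⟨Finset.mem_erase.mpr ⟨ham, ha.1⟩, ha.2⟩
          rw [hempty] at this
          exact Finset.notMem_empty a this
  · rw [Finset.mem_sdiff] at hb
    by_cases hbm : b = m
    · -- b = m, then X* \ Y = ∅ and m ∈ Y, so X \ Y = ∅
      left
      ext a
      simp only [Finset.mem_sdiff, Finset.notMem_empty, iff_false, not_and, not_not]
      intro haX
      by_cases ham : a = m
      · exact ham ▸ hbm ▸ hb.1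
      · by_cases haY : a ∈ Y
        · exact haY
        · exfalso
          have ha' : a ∈ X.erase m \ Y :=
            Finset.mem_sdiff.mpr ⟨Finset.mem_erase.mpr ⟨ham, haX⟩, haY⟩
          have h1 : b ≤ a := hball a ha'
          have h2 : a ≤ m := hmax a haX
          exact ham (le_antisymm h2 (hbm ▸ h1))
    · right
      refine ⟨b, Finset.mem_sdiff.mpr ⟨hb.1, fun hbX => hb.2 (Finset.mem_erase.mpr ⟨hbm, hbX⟩)⟩, ?_⟩
      intro a ha
      rw [Finset.mem_sdiff] at ha
      by_cases ham : a = m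
      · exact ham ▸ h2 b hb.1
      · exact hball a (Finset.mem_sdiff.mpr ⟨Finset.mem_erase.mpr ⟨ham, ha.1⟩, ha.2⟩)
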